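/- For the union of two valid stub sets: if Ŝ_1 ⊆ S(V_{t_1}) and Ŝ_2 ⊆ S(V_{t_2}) are valid stub sets with Ŝ_1 ∩ S(X_t) = Ŝ_2 ∩ S(X_t) = S, and no edge of C joins a vertex of V_{t_1} \ X_t to a vertex of V_{t_2} \ X_t, then Ŝ_1 ∪ Ŝ_2 is a valid stub set and I(Ŝ_1 ∪ Ŝ_2) = I(Ŝ_1) + I(Ŝ_2) − I(S). -/
import Mathlib


open scoped Classical

/-- The stub pairs `(u, ℓ)` with `u ∈ A` and `ℓ` a candidate stub length of `u`. -/
noncomputable def stubPairs {V : Type*} (cand : V → Finset ℝ) (A : Finset V) :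
    Finset (V × ℝ) :=
  A.biUnion fun u => (cand u).image fun l => (u, l)

/-- A stub set over the vertex set `A` is valid if it contains exactly one candidate stub
pair per vertex of `A` and no two of its pairs intersect. -/
def ValidStubSet {V : Type*} (cand : V → Finset ℝ) (meets : V → ℝ → V → ℝ → Prop)
    (A : Finset V) (S : Finset (V × ℝ)) : Prop :=
  S ⊆ stubPairs cand A ∧ (∀ u ∈ A, ∃! l : ℝ, (u, l) ∈ S) ∧
  ∀ p ∈ S, ∀ q ∈ S, p.1 ≠ q.1 → ¬ meets p.1 p.2 q.1 q.2

/-- The ink of a stub set: the total stub length. -/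
noncomputable def inkOf {V : Type*} (S : Finset (V × ℝ)) : ℝ := ∑ p ∈ S, p.2

/-- The dynamic-programming table: `Wtab cand meets X Vt S` is the maximum ink of a valid
stub set `T` on `Vt` with `S ⊆ T` and `T ∩ S(X) = S` (and `⊥ = -∞` if none exists). -/
noncomputable def Wtab {V : Type*} (cand : V → Finset ℝ)
    (meets : V → ℝ → V → ℝ → Prop) (X Vt : Finset V) (S : Finset (V × ℝ)) : EReal :=
  sSup {x : EReal | ∃ T : Finset (V × ℝ), ValidStubSet cand meets Vt T ∧
    S ⊆ T ∧ T ∩ stubPairs cand X = S ∧ x = (inkOf T : EReal)}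



lemma mem_stubPairs {V : Type*} [DecidableEq V] {cand : V → Finset ℝ} {A : Finset V}
    {p : V × ℝ} : p ∈ stubPairs cand A ↔ p.1 ∈ A ∧ p.2 ∈ cand p.1 := by
  classical
  constructor
  · intro h
    simp only [stubPairs, Finset.mem_biUnion, Finset.mem_image] at h
    obtain ⟨u, hu, l, hl, rfl⟩ := h
    exact ⟨hu, hl⟩
  · intro ⟨h1, h2⟩
    simp only [stubPairs, Finset.mem_biUnion, Finset.mem_image]
    exact ⟨p.1, h1, p.2, h2, rfl⟩

/-- union of two valid stub sets.  If `S₁ ⊆ S(V_{t₁})` and `S₂ ⊆ S(V_{t₂})`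
are valid stub sets with `S₁ ∩ S(X_t) = S₂ ∩ S(X_t) = S`, `V_{t₁} ∩ V_{t₂} = X_t`, stub
pairs can only intersect along edges of `C`, and no edge of `C` joins a vertex of
`V_{t₁} \ X_t` to a vertex of `V_{t₂} \ X_t`, then `S₁ ∪ S₂` is a valid stub set (over
`V_{t₁} ∪ V_{t₂}`) and `I(S₁ ∪ S₂) = I(S₁) + I(S₂) − I(S)`. -/
theorem stmt_11 {V : Type*} [DecidableEq V] (C : SimpleGraph V)
    (cand : V → Finset ℝ)
    (meets : V → ℝ → V → ℝ → Prop)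
    (meets_symm : ∀ u a w b, meets u a w b → meets w b u a)
    (meets_adj : ∀ u a w b, meets u a w b → C.Adj u w)
    (Xt Vt₁ Vt₂ : Finset V) (hX₁ : Xt ⊆ Vt₁) (hX₂ : Xt ⊆ Vt₂)
    (hcap : Vt₁ ∩ Vt₂ = Xt)
    (hsep : ∀ u ∈ Vt₁ \ Xt, ∀ w ∈ Vt₂ \ Xt, ¬ C.Adj u w)
    (S₁ S₂ S : Finset (V × ℝ))
    (h₁ : ValidStubSet cand meets Vt₁ S₁) (h₂ : ValidStubSet cand meets Vt₂ S₂)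
    (hS₁ : S₁ ∩ stubPairs cand Xt = S) (hS₂ : S₂ ∩ stubPairs cand Xt = S) :
    ValidStubSet cand meets (Vt₁ ∪ Vt₂) (S₁ ∪ S₂) ∧
    inkOf (S₁ ∪ S₂) = inkOf S₁ + inkOf S₂ - inkOf S := by
  obtain ⟨hsub₁, huniq₁, hmeet₁⟩ := h₁
  obtain ⟨hsub₂, huniq₂, hmeet₂⟩ := h₂
  have hSsub₁ : S ⊆ S₁ := hS₁ ▸ Finset.inter_subset_left
  have hSsub₂ : S ⊆ S₂ := hS₂ ▸ Finset.inter_subset_left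
  have hcapS : S₁ ∩ S₂ = S := by
    apply Finset.Subset.antisymm
    · intro p hp
      rw [Finset.mem_inter] at hp
      have h1 := mem_stubPairs.1 (hsub₁ hp.1)
      have h2 := mem_stubPairs.1 (hsub₂ hp.2)
      have hx : p.1 ∈ Xt := hcap ▸ Finset.mem_inter.2 ⟨h1.1, h2.1⟩
      rw [← hS₁, Finset.mem_inter]
      exact ⟨hp.1, mem_stubPairs.2 ⟨hx, h1.2⟩⟩
    · exact Finset.subset_inter hSsub₁ hSsub₂
  -- key: a pair in S₂ whose vertex lies in Vt₁ must be in S (hence S₁), and symm.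
  have key₂ : ∀ p ∈ S₂, p.1 ∈ Vt₁ → p ∈ S₁ := by
    intro p hp hv
    have h2 := mem_stubPairs.1 (hsub₂ hp)
    have hx : p.1 ∈ Xt := hcap ▸ Finset.mem_inter.2 ⟨hv, h2.1⟩
    exact hSsub₁ (hS₂ ▸ Finset.mem_inter.2 ⟨hp, mem_stubPairs.2 ⟨hx, h2.2⟩⟩)
  have key₁ : ∀ p ∈ S₁, p.1 ∈ Vt₂ → p ∈ S₂ := by
    intro p hp hv
    have h1 := mem_stubPairs.1 (hsub₁ hp)
    have hx : p.1 ∈ Xt := hcap ▸ Finset.mem_inter.2 ⟨h1.1, hv⟩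
    exact hSsub₂ (hS₁ ▸ Finset.mem_inter.2 ⟨hp, mem_stubPairs.2 ⟨hx, h1.2⟩⟩)
  have hmeet_cross : ∀ p ∈ S₁, ∀ q ∈ S₂, p.1 ≠ q.1 → ¬ meets p.1 p.2 q.1 q.2 := by
    intro p hp q hq hne hm
    have hadj := meets_adj _ _ _ _ hm
    have hpv := (mem_stubPairs.1 (hsub₁ hp)).1
    have hqv := (mem_stubPairs.1 (hsub₂ hq)).1
    by_cases hpx : p.1 ∈ Xt
    · exact hmeet₂ p (key₁ p hp (hX₂ hpx)) q hq hne hm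
    by_cases hqx : q.1 ∈ Xt
    · exact hmeet₁ p hp q (key₂ q hq (hX₁ hqx)) hne hm
    exact hsep p.1 (Finset.mem_sdiff.2 ⟨hpv, hpx⟩) q.1 (Finset.mem_sdiff.2 ⟨hqv, hqx⟩) hadj
  constructor
  · refine ⟨?_, ?_, ?_⟩
    · intro p hp
      rcases Finset.mem_union.1 hp with h | h
      · have := mem_stubPairs.1 (hsub₁ h)
        exact mem_stubPairs.2 ⟨Finset.mem_union_left _ this.1, this.2⟩
      · have := mem_stubPairs.1 (hsub₂ h)
        exact mem_stubPairs.2 ⟨Finset.mem_union_right _ this.1, this.2⟩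
    · intro u hu
      rcases Finset.mem_union.1 hu with hu | hu
      · obtain ⟨l, hl, hl'⟩ := huniq₁ u hu
        refine ⟨l, Finset.mem_union_left _ hl, ?_⟩
        intro l' hl''
        rcases Finset.mem_union.1 hl'' with h | h
        · exact hl' l' h
        · exact hl' l' (key₂ (u, l') h hu)
      · obtain ⟨l, hl, hl'⟩ := huniq₂ u hu
        refine ⟨l, Finset.mem_union_right _ hl, ?_⟩
        intro l' hl''
        rcases Finset.mem_union.1 hl'' with h | h
        · exact hl' l' (key₁ (u, l') h hu)
        · exact hl' l' h
    · intro p hp q hq hne hm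
      rcases Finset.mem_union.1 hp with hp | hp <;> rcases Finset.mem_union.1 hq with hq | hq
      · exact hmeet₁ p hp q hq hne hm
      · exact hmeet_cross p hp q hq hne hm
      · exact hmeet_cross q hq p hp hne.symm (meets_symm _ _ _ _ hm)
      · exact hmeet₂ p hp q hq hne hm
  · have := Finset.sum_union_inter (s₁ := S₁) (s₂ := S₂) (f := fun p => p.2)
    rw [hcapS] at this
    simp only [inkOf]
    linarith
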